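/- The ℂ-algebra homomorphism ℂ[A,B,C,D] → O(SL₂)[z] defined by A ↦ az, B ↦ bz, C ↦ cz, D ↦ dz is injective, its image is exactly the Rees algebra ⊕_{n≥0} F_n z^n ⊆ O(SL₂)[z], and it sends AD − BC to z². In other words, the Vinberg semigroup of SL₂ is the semigroup Mat₂ of 2×2 matrices, and under this identification the abelianization map corresponds to the determinant. -/

import Mathlib

open MvPolynomial

/-- `O(SL₂) = ℂ[a,b,c,d]/(ad − bc − 1)`, with `a = X 0`, `b = X 1`, `c = X 2`, `d = X 3`. -/
noncomputable abbrev OSL2 : Type :=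
  MvPolynomial (Fin 4) ℂ ⧸
    (Ideal.span {(X 0 : MvPolynomial (Fin 4) ℂ) * X 3 - X 1 * X 2 - 1})

/-- The quotient map `ℂ[a,b,c,d] → O(SL₂)`. -/
noncomputable def mkSL : MvPolynomial (Fin 4) ℂ →ₐ[ℂ] OSL2 :=
  Ideal.Quotient.mkₐ ℂ _

/-- The Peter–Weyl filtration subspace `F_n ⊆ O(SL₂)`. -/
noncomputable def Fdeg (n : ℤ) : Submodule ℂ OSL2 :=
  Submodule.span ℂ
    {x : OSL2 | ∃ k : Fin 4 → ℕ,
      ((∑ i, k i : ℕ) : ℤ) ≤ n ∧ ((∑ i, k i : ℕ) : ℤ) ≡ n [ZMOD 2] ∧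
      x = mkSL (∏ i, X i ^ k i)}

/-- The map `ℂ[A,B,C,D] → O(SL₂)[z]`, `A ↦ az, B ↦ bz, C ↦ cz, D ↦ dz`. -/
noncomputable def vinbergMap : MvPolynomial (Fin 4) ℂ →ₐ[ℂ] Polynomial OSL2 :=
  aeval (fun i : Fin 4 => Polynomial.C (mkSL (X i)) * Polynomial.X)

lemma mkSL_rel : mkSL ((X 0 : MvPolynomial (Fin 4) ℂ) * X 3 - X 1 * X 2) = 1 := by
  have h : mkSL ((X 0 : MvPolynomial (Fin 4) ℂ) * X 3 - X 1 * X 2 - 1) = 0 := by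
    rw [mkSL, Ideal.Quotient.mkₐ_eq_mk, Ideal.Quotient.eq_zero_iff_mem]
    exact Ideal.subset_span rfl
  rw [map_sub, map_one, sub_eq_zero] at h
  exact h

lemma vinbergMap_monomial (s : Fin 4 →₀ ℕ) (a : ℂ) :
    vinbergMap (monomial s a) =
      Polynomial.C (mkSL (monomial s a)) * Polynomial.X ^ (s.degree) := by
  have PCdef : ∀ y : MvPolynomial (Fin 4) ℂ,
      ((Polynomial.C.comp mkSL.toRingHom : MvPolynomial (Fin 4) ℂ →+* Polynomial OSL2)) y
        = Polynomial.C (mkSL y) := fun y => rfl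
  rw [vinbergMap, aeval_monomial]
  have h1 : (s.prod fun i k => (Polynomial.C (mkSL (X i)) * Polynomial.X) ^ k) =
      Polynomial.C (mkSL (s.prod fun i k => X i ^ k)) * Polynomial.X ^ s.degree := by
    rw [Finsupp.prod, Finsupp.prod, Finsupp.degree_apply, ← PCdef, map_prod]
    rw [show (Polynomial.X : Polynomial OSL2) ^ (∑ i ∈ s.support, s i) =
      ∏ i ∈ s.support, Polynomial.X ^ s i from (Finset.prod_pow_eq_pow_sum s.support (fun i => s i)
        (Polynomial.X : Polynomial OSL2)).symm]
    rw [← Finset.prod_mul_distrib]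
    refine Finset.prod_congr rfl (fun i _ => ?_)
    rw [PCdef, map_pow, Polynomial.C_pow]
    exact mul_pow (M := Polynomial OSL2) _ _ _
  rw [h1, monomial_eq, map_mul]
  have h2 : (algebraMap ℂ (Polynomial OSL2)) a = Polynomial.C (mkSL (C a)) := by
    rw [Polynomial.algebraMap_apply]
    congr 1
  rw [h2, ← mul_assoc, ← map_mul, ← map_mul]

lemma coeff_vinbergMap (p : MvPolynomial (Fin 4) ℂ) (n : ℕ) :
    (vinbergMap p).coeff n = mkSL (homogeneousComponent n p) := by
  induction p using MvPolynomial.induction_on' with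
  | monomial s a =>
    rw [vinbergMap_monomial, Polynomial.coeff_C_mul, Polynomial.coeff_X_pow,
      homogeneousComponent_of_mem (mem_homogeneousSubmodule _ _ |>.mpr
        (isHomogeneous_monomial a rfl))]
    by_cases h : n = s.degree <;> simp [h, apply_ite mkSL]
  | add p q hp hq =>
    rw [map_add, Polynomial.coeff_add, hp, hq, map_add, map_add]

lemma mkSL_mem_Fdeg {p : MvPolynomial (Fin 4) ℂ} {n : ℕ} (hp : p.IsHomogeneous n) :
    mkSL p ∈ Fdeg (n : ℤ) := by
  rw [p.as_sum, map_sum]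
  refine Submodule.sum_mem _ (fun s hs => ?_)
  have hdegsum : s.degree = ∑ i, s i :=
    Finset.sum_subset (Finset.subset_univ _)
      (fun i _ hi => Finsupp.notMem_support_iff.mp hi)
  have hdeg : (∑ i, s i) = n := by
    rw [← hdegsum, Finsupp.degree_eq_weight_one]
    exact hp (mem_support_iff.mp hs)
  have hmono : mkSL (monomial s (coeff s p)) = (coeff s p) • mkSL (∏ i, X i ^ s i) := by
    rw [monomial_eq, map_mul, Finsupp.prod_fintype _ _ (fun i => pow_zero _),
      ← MvPolynomial.algebraMap_eq, AlgHom.commutes]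
    exact (Algebra.smul_def _ _).symm
  rw [hmono]
  refine Submodule.smul_mem _ _ (Submodule.subset_span ?_)
  exact ⟨fun i => s i, by rw [hdeg], by rw [hdeg], rfl⟩

lemma exists_rep {n : ℕ} {x : OSL2} (hx : x ∈ Fdeg (n : ℤ)) :
    ∃ q : MvPolynomial (Fin 4) ℂ, q.IsHomogeneous n ∧ mkSL q = x := by
  induction hx using Submodule.span_induction with
  | mem x h =>
    obtain ⟨k, hle, hmod, rfl⟩ := h
    obtain ⟨t, ht⟩ := Int.ModEq.dvd hmod
    have ht0 : 0 ≤ t := by nlinarith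
    have hn : n = (∑ i, k i) + 2 * t.toNat := by omega
    refine ⟨(∏ i, X i ^ k i) * ((X 0 : MvPolynomial (Fin 4) ℂ) * X 3 - X 1 * X 2) ^ t.toNat,
      ?_, by rw [map_mul, map_pow, mkSL_rel, one_pow, mul_one]⟩
    have h1 : (∏ i : Fin 4, (X i : MvPolynomial (Fin 4) ℂ) ^ k i).IsHomogeneous (∑ i, k i) :=
      IsHomogeneous.prod _ _ _ (fun i _ => isHomogeneous_X_pow i (k i))
    have h2 : ((X 0 : MvPolynomial (Fin 4) ℂ) * X 3 - X 1 * X 2).IsHomogeneous 2 := by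
      have := (((isHomogeneous_X ℂ (0 : Fin 4)).mul (isHomogeneous_X ℂ 3)).sub
        ((isHomogeneous_X ℂ 1).mul (isHomogeneous_X ℂ 2)))
      simpa using this
    simpa [← hn] using h1.mul (h2.pow t.toNat)
  | zero => exact ⟨0, isHomogeneous_zero _ _ _, map_zero _⟩
  | add x y _ _ hx hy =>
    obtain ⟨q1, h1, e1⟩ := hx; obtain ⟨q2, h2, e2⟩ := hy
    exact ⟨q1 + q2, h1.add h2, by rw [map_add, e1, e2]⟩
  | smul a x _ hx =>
    obtain ⟨q, h, e⟩ := hx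
    exact ⟨a • q, (mem_homogeneousSubmodule _ _).mp
      (Submodule.smul_mem _ a ((mem_homogeneousSubmodule _ _).mpr h)),
      by rw [map_smul, e]⟩

lemma aeval_point (v : Fin 4 → ℂ) (hv : v 0 * v 3 - v 1 * v 2 = 1) (z : ℂ)
    (p : MvPolynomial (Fin 4) ℂ) (hp : vinbergMap p = 0) :
    eval (fun i => v i * z) p = 0 := by
  have hIker : Ideal.span {(X 0 : MvPolynomial (Fin 4) ℂ) * X 3 - X 1 * X 2 - 1} ≤
      RingHom.ker (aeval v : MvPolynomial (Fin 4) ℂ →ₐ[ℂ] ℂ) := by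
    rw [Ideal.span_le]
    rintro x hx
    rw [Set.mem_singleton_iff] at hx
    subst hx
    simp [RingHom.mem_ker, hv]
  set evq : OSL2 →ₐ[ℂ] ℂ :=
    Ideal.Quotient.liftₐ _ (aeval v) (fun a ha => hIker ha) with hevq
  have hevq_mk : ∀ y : MvPolynomial (Fin 4) ℂ, evq (mkSL y) = aeval v y := by
    intro y
    rw [hevq, mkSL, Ideal.Quotient.mkₐ_eq_mk]
    rfl
  set Ψ : Polynomial OSL2 →ₐ[ℂ] ℂ :=
    (Polynomial.aeval z).comp (Polynomial.mapAlgHom evq) with hΨ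
  have key : Ψ.comp vinbergMap = aeval (fun i => v i * z) := by
    apply MvPolynomial.algHom_ext
    intro i
    rw [AlgHom.comp_apply, vinbergMap, aeval_X, aeval_X, hΨ, AlgHom.comp_apply]
    simp [Polynomial.mapAlgHom, hevq_mk]
  have h1 : aeval (fun i => v i * z) p = 0 := by
    rw [← key, AlgHom.comp_apply, hp, map_zero]
  rw [← coe_aeval_eq_eval]
  exact h1

lemma vinberg_inj : Function.Injective vinbergMap := by
  rw [injective_iff_map_eq_zero]
  intro p hp
  have key : ∀ w : Fin 4 → ℂ, eval w (p * ((X 0 : MvPolynomial (Fin 4) ℂ) * X 3 - X 1 * X 2)) = 0 := by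
    intro w
    rw [map_mul]
    by_cases hw : w 0 * w 3 - w 1 * w 2 = 0
    · have : eval w ((X 0 : MvPolynomial (Fin 4) ℂ) * X 3 - X 1 * X 2) = 0 := by
        simpa using hw
      rw [this, mul_zero]
    · obtain ⟨z, hz⟩ := IsAlgClosed.exists_pow_nat_eq (w 0 * w 3 - w 1 * w 2)
        (by norm_num : 0 < 2)
      have hz0 : z ≠ 0 := by
        intro h
        apply hw
        rw [← hz, h]
        ring
      have hv : (w 0 / z) * (w 3 / z) - (w 1 / z) * (w 2 / z) = 1 := by
        field_simp
        linear_combination -hz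
      have h1 := aeval_point (fun i => w i / z) hv z p hp
      have hw2 : (fun i => w i / z * z) = w := funext fun i => div_mul_cancel₀ _ hz0
      rw [hw2] at h1
      rw [h1, zero_mul]
  have h0 : p * ((X 0 : MvPolynomial (Fin 4) ℂ) * X 3 - X 1 * X 2) = 0 :=
    MvPolynomial.funext (fun w => by rw [key w, map_zero])
  rcases mul_eq_zero.mp h0 with h | h
  · exact h
  · exfalso
    have h2 := congrArg (eval (fun i : Fin 4 => if i = 0 ∨ i = 3 then (1 : ℂ) else 0)) h
    simp at h2

/-- The homomorphism `ℂ[A,B,C,D] → O(SL₂)[z]` defined by `A ↦ az`,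
`B ↦ bz`, `C ↦ cz`, `D ↦ dz` is injective, its image is exactly the Rees algebra
`⊕_{n≥0} F_n z^n` (the polynomials whose `n`-th coefficient lies in `F_n`), and it
sends `AD − BC` to `z²`.  In other words the Vinberg semigroup of `SL₂` is the
semigroup `Mat₂` of `2×2` matrices, and under this identification the abelianization
map corresponds to the determinant. -/
theorem vinberg_SL2 :
    Function.Injective vinbergMap
      ∧ (∀ p : Polynomial OSL2,
          (∃ x, vinbergMap x = p) ↔ ∀ n : ℕ, p.coeff n ∈ Fdeg (n : ℤ))
      ∧ vinbergMap ((X 0 : MvPolynomial (Fin 4) ℂ) * X 3 - X 1 * X 2)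
          = Polynomial.X ^ 2 := by
  refine ⟨vinberg_inj, fun p => ⟨?_, ?_⟩, ?_⟩
  · rintro ⟨x, rfl⟩ n
    rw [coeff_vinbergMap]
    exact mkSL_mem_Fdeg (homogeneousComponent_isHomogeneous n x)
  · intro hp
    choose q hq1 hq2 using fun n => exists_rep (hp n)
    refine ⟨∑ n ∈ p.support, q n, ?_⟩
    ext m
    rw [coeff_vinbergMap, map_sum, map_sum]
    have hterm : ∀ n, mkSL (homogeneousComponent m (q n)) =
        if m = n then p.coeff n else 0 := by
      intro n
      rw [homogeneousComponent_of_mem ((mem_homogeneousSubmodule _ _).mpr (hq1 n)),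
        apply_ite mkSL, map_zero, hq2 n]
    simp_rw [hterm]
    rw [Finset.sum_ite_eq]
    by_cases hm : m ∈ p.support
    · rw [if_pos hm]
    · rw [if_neg hm, eq_comm]
      exact Polynomial.notMem_support_iff.mp hm
  · have h1 : vinbergMap ((X 0 : MvPolynomial (Fin 4) ℂ) * X 3 - X 1 * X 2)
        = Polynomial.C (mkSL ((X 0 : MvPolynomial (Fin 4) ℂ) * X 3 - X 1 * X 2))
          * Polynomial.X ^ 2 := by
      rw [vinbergMap]
      simp only [map_sub, map_mul, aeval_X]
      ring
    rw [h1, mkSL_rel, map_one, one_mul]
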